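/- For every ε with 0 < ε < 1/2 there exists H₀ > 0 such that for all H ≥ H₀, the map f(z) = h_H(z − 1/2) sends the interval [0, ε] into itself and is a contraction on [0, ε] (its derivative satisfies |f′(z)| < 1 for all z ∈ [0, ε], with a contraction constant strictly less than 1); consequently f has a unique fixed point in [0, ε], and this fixed point is stable. -/

import Mathlib

open Filter

/-- The parametrized sigmoid `h_H(x) = 1/(1 + exp(−H·x))`. -/
noncomputable def sigmoidH (H x : ℝ) : ℝ := 1 / (1 + Real.exp (-H * x))

private lemma sigmoid_hasDerivAt (H z : ℝ) :
    HasDerivAt (fun z => sigmoidH H (z - 1 / 2))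
      (H * Real.exp (-H * (z - 1 / 2)) / (1 + Real.exp (-H * (z - 1 / 2))) ^ 2) z := by
  have hE : HasDerivAt (fun z : ℝ => Real.exp (-H * (z - 1 / 2)))
      (Real.exp (-H * (z - 1 / 2)) * (-H)) z := by
    have h1 : HasDerivAt (fun z : ℝ => -H * (z - 1 / 2)) (-H) z := by
      exact (((hasDerivAt_id z).sub_const (1 / 2)).const_mul (-H)).congr_deriv (by ring)
    exact (Real.hasDerivAt_exp _).comp z h1
  have hg : HasDerivAt (fun z : ℝ => 1 + Real.exp (-H * (z - 1 / 2)))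
      (Real.exp (-H * (z - 1 / 2)) * (-H)) z := hE.const_add 1
  have hpos : (0 : ℝ) < 1 + Real.exp (-H * (z - 1 / 2)) := by positivity
  have := hg.inv hpos.ne'
  have h2 : -(Real.exp (-H * (z - 1 / 2)) * (-H)) / (1 + Real.exp (-H * (z - 1 / 2))) ^ 2
      = H * Real.exp (-H * (z - 1 / 2)) / (1 + Real.exp (-H * (z - 1 / 2))) ^ 2 := by ring
  rw [h2] at this
  refine this.congr_of_eventuallyEq (Filter.Eventually.of_forall fun w => ?_)
  simp [sigmoidH, one_div]

theorem stmt_6 (ε : ℝ) (hεpos : 0 < ε) (hεlt : ε < 1 / 2) :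
    ∃ H₀ > (0 : ℝ), ∀ H ≥ H₀,
      let f : ℝ → ℝ := fun z => sigmoidH H (z - 1 / 2)
      -- `f` maps `[0, ε]` into itself
      Set.MapsTo f (Set.Icc 0 ε) (Set.Icc 0 ε) ∧
      -- the derivative of `f` is strictly less than 1 in absolute value on `[0, ε]`
      (∀ z ∈ Set.Icc (0 : ℝ) ε, |deriv f z| < 1) ∧
      -- `f` is a contraction on `[0, ε]` with contraction constant strictly less than 1
      (∃ L : NNReal, L < 1 ∧ LipschitzOnWith L f (Set.Icc 0 ε)) ∧
      -- consequently `f` has a unique fixed point in `[0, ε]`, and it is stable: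
      -- iterates of `f` starting anywhere in `[0, ε]` converge to it
      (∃ zf ∈ Set.Icc (0 : ℝ) ε, f zf = zf ∧
        (∀ z ∈ Set.Icc (0 : ℝ) ε, f z = z → z = zf) ∧
        (∀ z₀ ∈ Set.Icc (0 : ℝ) ε,
          Tendsto (fun k => f^[k] z₀) atTop (nhds zf))) := by
  set δ : ℝ := 1 / 2 - ε with hδdef
  have hδ : 0 < δ := by simp only [hδdef]; linarith
  set c : ℝ := min ε (1 / 2) with hcdef
  have hc : 0 < c := lt_min hεpos (by norm_num)
  -- `x * exp (-δ x) → 0`, so eventually `H * exp (-δ H) < c`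
  have htend : Tendsto (fun x : ℝ => x * Real.exp (-δ * x)) atTop (nhds 0) := by
    have := tendsto_rpow_mul_exp_neg_mul_atTop_nhds_zero 1 δ hδ
    refine this.congr' ?_
    filter_upwards [eventually_ge_atTop (0 : ℝ)] with x hx
    rw [Real.rpow_one]
  have hev : ∀ᶠ H in atTop, H * Real.exp (-δ * H) < c :=
    htend.eventually (eventually_lt_nhds hc)
  obtain ⟨H₁, hH₁⟩ := eventually_atTop.1 hev
  refine ⟨max H₁ 1, lt_of_lt_of_le one_pos (le_max_right _ _), ?_⟩
  intro H hH
  have hH1 : (1 : ℝ) ≤ H := le_trans (le_max_right _ _) hH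
  have hHpos : 0 < H := lt_of_lt_of_le one_pos hH1
  have hkey : H * Real.exp (-δ * H) < c := hH₁ H (le_trans (le_max_left _ _) hH)
  intro f
  -- basic bounds on `f` on `[0, ε]`
  have hEbound : ∀ z ∈ Set.Icc (0 : ℝ) ε, Real.exp (δ * H) ≤ Real.exp (-H * (z - 1 / 2)) := by
    intro z hz
    apply Real.exp_le_exp.2
    have := hz.2
    nlinarith [hδ, hHpos]
  have hfpos : ∀ z : ℝ, 0 < f z := by
    intro z
    have : (0 : ℝ) < 1 + Real.exp (-H * (z - 1 / 2)) := by positivity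
    exact div_pos one_pos this
  have hfle : ∀ z ∈ Set.Icc (0 : ℝ) ε, f z ≤ Real.exp (-δ * H) := by
    intro z hz
    have hE := hEbound z hz
    have hEpos : (0 : ℝ) < Real.exp (δ * H) := Real.exp_pos _
    have h1 : f z ≤ 1 / Real.exp (δ * H) := by
      apply div_le_div_of_nonneg_left one_pos.le hEpos
      linarith [hE]
    calc f z ≤ 1 / Real.exp (δ * H) := h1
      _ = Real.exp (-δ * H) := by rw [neg_mul, Real.exp_neg, one_div]
  have hexp_lt : Real.exp (-δ * H) < c := by
    calc Real.exp (-δ * H) = 1 * Real.exp (-δ * H) := (one_mul _).symm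
      _ ≤ H * Real.exp (-δ * H) := by
          apply mul_le_mul_of_nonneg_right hH1 (Real.exp_pos _).le
      _ < c := hkey
  -- MapsTo
  have hmaps : Set.MapsTo f (Set.Icc 0 ε) (Set.Icc 0 ε) := by
    intro z hz
    refine ⟨(hfpos z).le, ?_⟩
    have := hfle z hz
    have : f z < c := lt_of_le_of_lt this hexp_lt
    exact le_of_lt (lt_of_lt_of_le this (min_le_left _ _))
  -- derivative bound
  have hderiv : ∀ z : ℝ, deriv f z =
      H * Real.exp (-H * (z - 1 / 2)) / (1 + Real.exp (-H * (z - 1 / 2))) ^ 2 :=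
    fun z => (sigmoid_hasDerivAt H z).deriv
  have hderiv_bound : ∀ z ∈ Set.Icc (0 : ℝ) ε, |deriv f z| ≤ H * Real.exp (-δ * H) := by
    intro z hz
    rw [hderiv z]
    set E := Real.exp (-H * (z - 1 / 2)) with hEdef
    have hEpos : 0 < E := Real.exp_pos _
    have habs : |H * E / (1 + E) ^ 2| = H * E / (1 + E) ^ 2 := by
      rw [abs_of_nonneg]; positivity
    rw [habs]
    have h1 : H * E / (1 + E) ^ 2 ≤ H * E / E ^ 2 := by
      apply div_le_div_of_nonneg_left (by positivity) (by positivity)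
      nlinarith
    have h2 : H * E / E ^ 2 = H / E := by field_simp
    have h3 : H / E ≤ H / Real.exp (δ * H) := by
      apply div_le_div_of_nonneg_left hHpos.le (Real.exp_pos _) (hEbound z hz)
    have h4 : H / Real.exp (δ * H) = H * Real.exp (-δ * H) := by
      rw [neg_mul, Real.exp_neg, div_eq_mul_inv]
    linarith [h1, h2 ▸ h1, h3]
  have hc1 : c < 1 := lt_of_le_of_lt (min_le_right _ _) (by norm_num)
  have hbound_lt1 : H * Real.exp (-δ * H) < 1 := lt_trans hkey hc1
  have hderiv_lt : ∀ z ∈ Set.Icc (0 : ℝ) ε, |deriv f z| < 1 :=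
    fun z hz => lt_of_le_of_lt (hderiv_bound z hz) hbound_lt1
  -- Lipschitz constant
  set Lr : ℝ := H * Real.exp (-δ * H) with hLrdef
  have hLrnn : 0 ≤ Lr := by positivity
  set L : NNReal := ⟨Lr, hLrnn⟩ with hLdef
  have hL1 : L < 1 := by
    rw [← NNReal.coe_lt_coe]
    exact hbound_lt1
  have hlip : LipschitzOnWith L f (Set.Icc 0 ε) := by
    apply Convex.lipschitzOnWith_of_nnnorm_deriv_le
      (fun z _ => (sigmoid_hasDerivAt H z).differentiableAt)
      (fun z hz => ?_) (convex_Icc 0 ε)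
    rw [← NNReal.coe_le_coe, coe_nnnorm, Real.norm_eq_abs]
    exact hderiv_bound z hz
  refine ⟨hmaps, hderiv_lt, ⟨L, hL1, hlip⟩, ?_⟩
  -- fixed point via Banach
  have hcomplete : IsComplete (Set.Icc (0 : ℝ) ε) := (isCompact_Icc).isComplete
  have hcontr : ContractingWith L (hmaps.restrict f _ _) :=
    ⟨hL1, hlip.mapsToRestrict hmaps⟩
  have h0mem : (0 : ℝ) ∈ Set.Icc (0 : ℝ) ε := ⟨le_refl _, hεpos.le⟩
  obtain ⟨zf, hzfmem, hzffix, hzftend, -⟩ :=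
    hcontr.exists_fixedPoint' hcomplete hmaps h0mem (edist_ne_top _ _)
  have huniq : ∀ z ∈ Set.Icc (0 : ℝ) ε, f z = z → z = zf := by
    intro z hz hfz
    by_contra hne
    have hd : 0 < dist z zf := dist_pos.2 hne
    have := hlip.dist_le_mul z hz zf hzfmem
    rw [hfz, hzffix] at this
    have hL1' : (L : ℝ) < 1 := hL1
    nlinarith [this, hd]
  refine ⟨zf, hzfmem, hzffix, huniq, ?_⟩
  intro z₀ hz₀
  obtain ⟨y, hymem, hyfix, hytend, -⟩ :=
    hcontr.exists_fixedPoint' hcomplete hmaps hz₀ (edist_ne_top _ _)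
  have : y = zf := huniq y hymem hyfix
  rwa [this] at hytend
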